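/- Let f: R^n → R be differentiable with L-Lipschitz gradient, ψ convex, F = f + ψ, and let d satisfy Δ := ∇f(x)^T d + ψ(x+d) − ψ(x) ≤ −c‖d‖² for some c > 0. Then for any γ ∈ (0,1), the Armijo condition F(x + αd) ≤ F(x) + αγΔ holds for all step sizes α ∈ (0, min{1, 2(1−γ)c/L}]. -/

import Mathlib

open scoped RealInnerProductSpace

lemma descent_lemma {n : ℕ}
    (f : EuclideanSpace ℝ (Fin n) → ℝ)
    (gf : EuclideanSpace ℝ (Fin n) → EuclideanSpace ℝ (Fin n))
    (hgrad : ∀ x, HasGradientAt f (gf x) x)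
    (L : ℝ) (hL : 0 < L)
    (hLip : ∀ x y, ‖gf x - gf y‖ ≤ L * ‖x - y‖)
    (x y : EuclideanSpace ℝ (Fin n)) :
    f y ≤ f x + ⟪gf x, y - x⟫ + L / 2 * ‖y - x‖ ^ 2 := by
  set v := y - x with hv
  have hcont : Continuous gf := by
    have : LipschitzWith (Real.toNNReal L) gf :=
      LipschitzWith.of_dist_le_mul (fun a b => by
        rw [dist_eq_norm, dist_eq_norm, Real.coe_toNNReal L hL.le]
        exact hLip a b)
    exact this.continuous
  have hline : ∀ t : ℝ, HasDerivAt (fun t : ℝ => f (x + t • v))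
      ⟪gf (x + t • v), v⟫ t := by
    intro t
    have h1 : HasFDerivAt f (InnerProductSpace.toDual ℝ _ (gf (x + t • v))) (x + t • v) :=
      (hgrad _).hasFDerivAt
    have h2 : HasDerivAt (fun t : ℝ => x + t • v) v t := by
      simpa using ((hasDerivAt_id t).smul_const v).const_add x
    have h3 := h1.comp_hasDerivAt t h2
    simp at h3
    exact h3
  have hgcont : Continuous fun t : ℝ => ⟪gf (x + t • v), v⟫ := by
    exact (Continuous.inner (hcont.comp (continuous_const.add (continuous_id.smul continuous_const))) continuous_const)
  have hftc : f y - f x = ∫ t in (0:ℝ)..1, ⟪gf (x + t • v), v⟫ := by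
    have := intervalIntegral.integral_eq_sub_of_hasDerivAt
      (fun t _ => hline t) (hgcont.intervalIntegrable 0 1)
    simp only [one_smul, zero_smul, add_zero] at this
    rw [show x + v = y from by rw [hv]; abel] at this
    exact this.symm
  have hbound : ∀ t ∈ Set.Icc (0:ℝ) 1,
      ⟪gf (x + t • v), v⟫ ≤ ⟪gf x, v⟫ + L * t * ‖v‖ ^ 2 := by
    intro t ht
    have h1 : ⟪gf (x + t • v), v⟫ - ⟪gf x, v⟫ = ⟪gf (x + t • v) - gf x, v⟫ := by
      rw [inner_sub_left]
    have h2 : ⟪gf (x + t • v) - gf x, v⟫ ≤ ‖gf (x + t • v) - gf x‖ * ‖v‖ :=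
      real_inner_le_norm _ _
    have h3 : ‖gf (x + t • v) - gf x‖ ≤ L * (t * ‖v‖) := by
      have := hLip (x + t • v) x
      simpa [norm_smul, abs_of_nonneg ht.1, mul_assoc] using this
    nlinarith [norm_nonneg v, mul_le_mul_of_nonneg_right h3 (norm_nonneg v)]
  have hint : (∫ t in (0:ℝ)..1, ⟪gf (x + t • v), v⟫)
      ≤ ∫ t in (0:ℝ)..1, (⟪gf x, v⟫ + L * t * ‖v‖ ^ 2) := by
    apply intervalIntegral.integral_mono_on zero_le_one
      (hgcont.intervalIntegrable 0 1)
      ((continuous_const.add ((continuous_const.mul continuous_id).mul continuous_const)).intervalIntegrable 0 1)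
    exact hbound
  have hval : (∫ t in (0:ℝ)..1, (⟪gf x, v⟫ + L * t * ‖v‖ ^ 2))
      = ⟪gf x, v⟫ + L / 2 * ‖v‖ ^ 2 := by
    rw [intervalIntegral.integral_add (intervalIntegrable_const)
      ((show Continuous fun t : ℝ => L * t * ‖v‖ ^ 2 by
        exact (continuous_const.mul continuous_id).mul continuous_const).intervalIntegrable 0 1)]
    rw [show (fun t : ℝ => L * t * ‖v‖ ^ 2) = fun t : ℝ => (L * ‖v‖ ^ 2) * t from
      funext fun t => by ring, intervalIntegral.integral_const_mul, integral_id]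
    simp
    ring
  rw [hval] at hint
  linarith [hftc, hint]

theorem stmt1 {n : ℕ}
    (f : EuclideanSpace ℝ (Fin n) → ℝ)
    (gf : EuclideanSpace ℝ (Fin n) → EuclideanSpace ℝ (Fin n))
    (hgrad : ∀ x, HasGradientAt f (gf x) x)
    (L : ℝ) (hL : 0 < L)
    (hLip : ∀ x y, ‖gf x - gf y‖ ≤ L * ‖x - y‖)
    (ψ : EuclideanSpace ℝ (Fin n) → ℝ)
    (hψ : ConvexOn ℝ Set.univ ψ)
    (F : EuclideanSpace ℝ (Fin n) → ℝ)
    (hF : ∀ y, F y = f y + ψ y)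
    (x d : EuclideanSpace ℝ (Fin n))
    (Δ : ℝ) (hΔdef : Δ = ⟪gf x, d⟫ + ψ (x + d) - ψ x)
    (c : ℝ) (hc : 0 < c)
    (hΔ : Δ ≤ -c * ‖d‖ ^ 2)
    (γ : ℝ) (hγ0 : 0 < γ) (hγ1 : γ < 1) :
    ∀ α : ℝ, 0 < α → α ≤ min 1 (2 * (1 - γ) * c / L) →
      F (x + α • d) ≤ F x + α * γ * Δ := by
  intro α hα0 hαle
  have hα1 : α ≤ 1 := hαle.trans (min_le_left _ _)
  have hα2 : α ≤ 2 * (1 - γ) * c / L := hαle.trans (min_le_right _ _)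
  have hαL : L * α ≤ 2 * (1 - γ) * c := by
    have := (le_div_iff₀ hL).mp hα2
    linarith
  have hdesc := descent_lemma f gf hgrad L hL hLip x (x + α • d)
  have hsub : (x + α • d) - x = α • d := by abel
  rw [hsub] at hdesc
  have hinner : ⟪gf x, α • d⟫ = α * ⟪gf x, d⟫ := real_inner_smul_right _ _ _
  have hnorm : ‖α • d‖ ^ 2 = α ^ 2 * ‖d‖ ^ 2 := by
    rw [norm_smul]; rw [Real.norm_eq_abs, abs_of_pos hα0]; ring
  have hconv : ψ (x + α • d) ≤ (1 - α) * ψ x + α * ψ (x + d) := by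
    have := hψ.2 (Set.mem_univ x) (Set.mem_univ (x + d))
      (by linarith : (0:ℝ) ≤ 1 - α) hα0.le (by ring)
    have heq : (1 - α) • x + α • (x + d) = x + α • d := by
      module
    rw [heq] at this
    simpa using this
  have key : f (x + α • d) + ψ (x + α • d) ≤ f x + ψ x + α * Δ + L / 2 * (α ^ 2 * ‖d‖ ^ 2) := by
    rw [hΔdef]
    nlinarith [hdesc, hconv, hinner, hnorm]
  rw [hF, hF]
  have hfinal : α * Δ + L / 2 * (α ^ 2 * ‖d‖ ^ 2) ≤ α * γ * Δ := by
    have h1 : -Δ ≥ c * ‖d‖ ^ 2 := by linarith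
    have h2 : L * α * (α * ‖d‖ ^ 2) ≤ 2 * (1 - γ) * c * (α * ‖d‖ ^ 2) :=
      mul_le_mul_of_nonneg_right hαL (by positivity)
    have h3 : α * (c * ‖d‖ ^ 2) ≤ α * (-Δ) := mul_le_mul_of_nonneg_left h1 hα0.le
    have h4 := mul_le_mul_of_nonneg_left h3 (show (0:ℝ) ≤ 1 - γ by linarith)
    nlinarith [h2, h4]
  linarith
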